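/- arXiv:0809.1179 — 2 statements merged into one kernel-verified Lean document; each statement's English description precedes it below -/
import Mathlib

section
/- Let k ≥ 3, n ≥ 1, and let g be a graph automorphism of the Tower of Hanoi graph H_n^k that fixes the perfect state \overline{i} for some peg i. Then g maps the substructure [i] onto itself: for every vertex v with v(n−1) = i, the vertex g(v) also satisfies (g v)(n−1) = i. -/
/-- The Tower of Hanoi graph `H_n^k`: vertices are functions `Fin n → Fin k`
(disk `i` lies on peg `v i`; smaller indices are smaller disks); two states are
adjacent iff they differ by one legal move of a single disk `d`: the position of
`d` changes, all other disks stay, and no smaller disk lies on the source peg or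
the target peg of `d`. -/
def hanoiGraph (n k : ℕ) : SimpleGraph (Fin n → Fin k) where
  Adj v w := ∃ d : Fin n, v d ≠ w d ∧ (∀ i : Fin n, i ≠ d → v i = w i) ∧
    (∀ i : Fin n, i < d → v i ≠ v d ∧ v i ≠ w d)
  symm := by
    constructor
    rintro v w ⟨d, h1, h2, h3⟩
    refine ⟨d, h1.symm, fun i hi => (h2 i hi).symm, fun i hi => ?_⟩
    have he : v i = w i := h2 i (ne_of_lt hi)
    have h := h3 i hi
    exact ⟨he ▸ h.2, he ▸ h.1⟩
  loopless := by constructor; rintro v ⟨d, h1, -⟩; exact h1 rfl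

namespace HanoiAux

open SimpleGraph

variable {n k : ℕ}

/-- A permutation of the pegs induces a graph homomorphism of the Hanoi graph. -/
def permHom (σ : Equiv.Perm (Fin k)) : hanoiGraph n k →g hanoiGraph n k where
  toFun v := σ ∘ v
  map_rel' := by
    rintro v w ⟨d, h1, h2, h3⟩
    exact ⟨d, fun h => h1 (σ.injective h), fun i hi => congrArg σ (h2 i hi),
      fun i hi => ⟨fun h => (h3 i hi).1 (σ.injective h),
        fun h => (h3 i hi).2 (σ.injective h)⟩⟩

/-- Adding a new largest disk on a fixed peg is a graph homomorphism. -/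
def snocHom (x : Fin k) : hanoiGraph n k →g hanoiGraph (n + 1) k where
  toFun v := Fin.snoc v x
  map_rel' := by
    rintro v w ⟨d, h1, h2, h3⟩
    refine ⟨d.castSucc, by simpa using h1, ?_, ?_⟩
    · intro i hi
      induction i using Fin.lastCases with
      | last => simp
      | cast m =>
        have hm : m ≠ d := fun h => hi (by rw [h])
        simpa using h2 m hm
    · intro i hi
      induction i using Fin.lastCases with
      | last =>
        exfalso
        have := hi
        rw [Fin.lt_def] at this
        simp at this
        omega
      | cast m =>
        have hm : m < d := by
          rw [Fin.lt_def] at hi ⊢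
          simpa using hi
        simpa using h3 m hm

lemma exists_third (hk : 3 ≤ k) (a b : Fin k) : ∃ y : Fin k, y ≠ a ∧ y ≠ b := by
  by_contra hc
  push_neg at hc
  have hsub : (Finset.univ : Finset (Fin k)) ⊆ {a, b} := by
    intro y _
    rcases eq_or_ne y a with rfl | h
    · simp
    · simp [hc y h]
  have := Finset.card_le_card hsub
  simp [Finset.card_insert_le] at this
  have h2 : ({a, b} : Finset (Fin k)).card ≤ 2 :=
    (Finset.card_insert_le _ _).trans (by simp)
  omega

lemma snoc_const (a : Fin k) :
    (Fin.snoc (fun _ : Fin n => a) a) = (fun _ : Fin (n + 1) => a) := by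
  funext m
  induction m using Fin.lastCases <;> simp

lemma snoc_adj (hk : 3 ≤ k) {y x c : Fin k} (hxc : x ≠ c) (hyx : y ≠ x) (hyc : y ≠ c) :
    (hanoiGraph (n + 1) k).Adj (Fin.snoc (fun _ => y) x) (Fin.snoc (fun _ => y) c) := by
  refine ⟨Fin.last n, by simpa using hxc, ?_, ?_⟩
  · intro i hi
    induction i using Fin.lastCases with
    | last => exact absurd rfl hi
    | cast m => simp
  · intro i hi
    induction i using Fin.lastCases with
    | last => exact absurd hi (lt_irrefl _)
    | cast m => simpa using ⟨hyx, hyc⟩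

lemma reach (hk : 3 ≤ k) : ∀ (n : ℕ) (v : Fin n → Fin k) (c : Fin k),
    (hanoiGraph n k).Reachable v (fun _ => c) := by
  intro n
  induction n with
  | zero =>
    intro v c
    have hv : v = fun _ => c := funext fun m => m.elim0
    exact hv ▸ Reachable.refl _
  | succ n ih =>
    intro v c
    have hv : v = Fin.snoc (Fin.init v) (v (Fin.last n)) := (Fin.snoc_init_self v).symm
    rw [hv]
    by_cases hxc : v (Fin.last n) = c
    · rw [hxc]
      have r := (ih (Fin.init v) c).map (snocHom c)
      rwa [show (snocHom c) (fun _ => c) = fun _ => c from snoc_const c] at r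
    · obtain ⟨y, hyx, hyc⟩ := exists_third hk (v (Fin.last n)) c
      have r1 := (ih (Fin.init v) y).map (snocHom (v (Fin.last n)))
      have r2 : (hanoiGraph (n + 1) k).Reachable
          (Fin.snoc (fun _ => y) c) (fun _ => c) := by
        have r := (ih (fun _ => y) c).map (snocHom c)
        rwa [show (snocHom c) (fun _ => c) = fun _ => c from snoc_const c] at r
      exact r1.trans ((snoc_adj hk hxc hyx hyc).reachable.trans r2)

lemma shorten (hn : 1 ≤ n) :
    ∀ (L : ℕ) (v : Fin n → Fin k) (j : Fin k)
      (p : (hanoiGraph n k).Walk v (fun _ => j)),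
      p.length ≤ L → v ⟨n - 1, by omega⟩ ≠ j →
      ∃ q : (hanoiGraph n k).Walk v (fun _ => v ⟨n - 1, by omega⟩),
        q.length < p.length := by
  intro L
  induction L with
  | zero =>
    intro v j p hL hne
    have := SimpleGraph.Walk.eq_of_length_eq_zero (Nat.le_zero.mp hL)
    exact absurd (congrFun this _) hne
  | succ L ih =>
    intro v j p hL hne
    cases p with
    | nil => exact absurd rfl hne
    | @cons _ w _ h q =>
      rw [SimpleGraph.Walk.length_cons] at hL ⊢
      by_cases hw : w ⟨n - 1, by omega⟩ = v ⟨n - 1, by omega⟩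
      · have hwj : w ⟨n - 1, by omega⟩ ≠ j := by rw [hw]; exact hne
        obtain ⟨q', hq'⟩ := ih w j q (by omega) hwj
        refine ⟨SimpleGraph.Walk.cons h (q'.copy rfl (by rw [hw])), ?_⟩
        rw [SimpleGraph.Walk.length_cons, SimpleGraph.Walk.length_copy]
        omega
      · obtain ⟨d, h1, h2, h3⟩ := h
        have hd : d = ⟨n - 1, by omega⟩ := by
          by_contra hdne
          exact hw ((h2 ⟨n - 1, by omega⟩ (fun hh => hdne hh.symm)).symm)
        subst hd
        set i := v ⟨n - 1, by omega⟩ with hi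
        set p' := w ⟨n - 1, by omega⟩ with hp'
        have hτv : (fun m => (Equiv.swap i p') (w m)) = v := by
          funext m
          rcases eq_or_ne m ⟨n - 1, by omega⟩ with rfl | hm
          · rw [← hp', Equiv.swap_apply_right, hi]
          · have hmlt : m < (⟨n - 1, by omega⟩ : Fin n) := by
              rw [Fin.lt_def]
              have h2m := m.2
              have : m.1 ≠ n - 1 := fun hh => hm (Fin.ext hh)
              simp only []
              omega
            have h3m := h3 m hmlt
            rw [← (h2 m (ne_of_lt hmlt)),
              Equiv.swap_apply_of_ne_of_ne h3m.1 h3m.2]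
        by_cases hpj : p' = j
        · refine ⟨((q.map (permHom (Equiv.swap i p'))).copy hτv ?_), ?_⟩
          · funext m
            show Equiv.swap i p' j = i
            rw [← hpj, Equiv.swap_apply_right]
          · refine lt_of_eq_of_lt (SimpleGraph.Walk.length_copy _ _ _) ?_
            rw [SimpleGraph.Walk.length_map]
            omega
        · obtain ⟨r, hr⟩ := ih w j q (by omega) hpj
          refine ⟨((r.map (permHom (Equiv.swap i p'))).copy hτv ?_), ?_⟩
          · funext m
            show Equiv.swap i p' p' = i
            rw [Equiv.swap_apply_right]
          · refine lt_of_eq_of_lt (SimpleGraph.Walk.length_copy _ _ _) ?_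
            rw [SimpleGraph.Walk.length_map]
            omega

lemma dist_lt (hn : 1 ≤ n) (v : Fin n → Fin k) (j : Fin k)
    (hne : v ⟨n - 1, by omega⟩ ≠ j)
    (hr : (hanoiGraph n k).Reachable v (fun _ => j)) :
    (hanoiGraph n k).Reachable v (fun _ => v ⟨n - 1, by omega⟩) ∧
      (hanoiGraph n k).dist v (fun _ => v ⟨n - 1, by omega⟩) <
        (hanoiGraph n k).dist v (fun _ => j) := by
  obtain ⟨p, hp⟩ := hr.exists_walk_length_eq_dist
  obtain ⟨q, hq⟩ := shorten hn p.length v j p le_rfl hne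
  exact ⟨⟨q⟩, lt_of_le_of_lt (SimpleGraph.dist_le q) (hp ▸ hq)⟩

lemma iso_dist_le {V W : Type*} {G : SimpleGraph V} {G' : SimpleGraph W}
    (f : G ≃g G') (a b : V) : G'.dist (f a) (f b) ≤ G.dist a b := by
  by_cases hr : G.Reachable a b
  · obtain ⟨p, hp⟩ := hr.exists_walk_length_eq_dist
    calc G'.dist (f a) (f b) ≤ (p.map f.toHom).length := SimpleGraph.dist_le _
      _ = p.length := by rw [SimpleGraph.Walk.length_map]
      _ = _ := hp
  · have hnr : ¬ G'.Reachable (f a) (f b) := fun hr' => hr (by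
      have := hr'.map f.symm.toHom
      simpa using this)
    simp [SimpleGraph.dist_eq_zero_of_not_reachable hnr]

lemma iso_dist {V W : Type*} {G : SimpleGraph V} {G' : SimpleGraph W}
    (f : G ≃g G') (a b : V) : G'.dist (f a) (f b) = G.dist a b := by
  refine le_antisymm (iso_dist_le f a b) ?_
  have := iso_dist_le f.symm (f a) (f b)
  simpa using this

lemma neighbor_const (hn : 1 ≤ n) (c : Fin k) (w : Fin n → Fin k)
    (hw : (hanoiGraph n k).Adj (fun _ => c) w) :
    w = Function.update (fun _ => c) (⟨0, by omega⟩ : Fin n) (w ⟨0, by omega⟩) ∧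
      w ⟨0, by omega⟩ ≠ c := by
  obtain ⟨d, h1, h2, h3⟩ := hw
  have hd : d = ⟨0, by omega⟩ := by
    by_contra hne
    have hlt : (⟨0, by omega⟩ : Fin n) < d := by
      rw [Fin.lt_def]
      have : d.1 ≠ 0 := fun hh => hne (Fin.ext hh)
      simp only []
      omega
    exact (h3 _ hlt).1 rfl
  subst hd
  refine ⟨?_, fun hh => h1 hh.symm⟩
  funext m
  rcases eq_or_ne m ⟨0, by omega⟩ with rfl | hm
  · rw [Function.update_self]
  · rw [Function.update_of_ne hm]
    exact (h2 m hm).symm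

lemma const_clique (hn : 1 ≤ n) (c : Fin k) (w1 w2 : Fin n → Fin k)
    (a1 : (hanoiGraph n k).Adj (fun _ => c) w1)
    (a2 : (hanoiGraph n k).Adj (fun _ => c) w2) (hne : w1 ≠ w2) :
    (hanoiGraph n k).Adj w1 w2 := by
  obtain ⟨e1, x1⟩ := neighbor_const hn c w1 a1
  obtain ⟨e2, x2⟩ := neighbor_const hn c w2 a2
  refine ⟨⟨0, by omega⟩, ?_, ?_, ?_⟩
  · intro hh
    exact hne (by rw [e1, e2, hh])
  · intro m hm
    rw [e1, e2, Function.update_of_ne hm, Function.update_of_ne hm]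
  · intro m hm
    exfalso
    rw [Fin.lt_def] at hm
    simp at hm

lemma nonconst_not_clique (hk : 3 ≤ k) (hn : 1 ≤ n) (v : Fin n → Fin k)
    (hv : ∀ c, v ≠ fun _ => c) :
    ∃ w1 w2, (hanoiGraph n k).Adj v w1 ∧ (hanoiGraph n k).Adj v w2 ∧ w1 ≠ w2 ∧
      ¬ (hanoiGraph n k).Adj w1 w2 := by
  classical
  set z : Fin n := ⟨0, by omega⟩ with hz
  have hex : ∃ t : ℕ, ∃ h : t < n, v ⟨t, h⟩ ≠ v z := by
    by_contra hc
    push_neg at hc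
    exact hv (v z) (funext fun m => hc m.1 m.2)
  obtain ⟨hd0n, hd0⟩ := Nat.find_spec hex
  set d : Fin n := ⟨Nat.find hex, hd0n⟩ with hdd
  have hvd : v d ≠ v z := hd0
  have hmin : ∀ m : Fin n, m < d → v m = v z := by
    intro m hm
    by_contra hne
    exact Nat.find_min hex (by rw [Fin.lt_def] at hm; exact hm) ⟨m.2, hne⟩
  have hdz : d ≠ z := fun h => hvd (by rw [h])
  have hzd : z ≠ d := fun h => hdz h.symm
  obtain ⟨x', hx1, hx2⟩ := exists_third hk (v z) (v d)
  refine ⟨Function.update v z x', Function.update v d x', ?_, ?_, ?_, ?_⟩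
  · refine ⟨z, ?_, ?_, ?_⟩
    · rw [Function.update_self]
      exact fun h => hx1 h.symm
    · intro m hm
      rw [Function.update_of_ne hm]
    · intro m hm
      exfalso
      rw [Fin.lt_def] at hm
      simp [hz] at hm
  · refine ⟨d, ?_, ?_, ?_⟩
    · rw [Function.update_self]
      exact fun h => hx2 h.symm
    · intro m hm
      rw [Function.update_of_ne hm]
    · intro m hm
      have hmz : v m = v z := hmin m hm
      constructor
      · rw [hmz]
        exact fun h => hvd h.symm
      · rw [Function.update_self, hmz]
        exact fun h => hx1 h.symm
  · intro hh
    have := congrFun hh z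
    rw [Function.update_self, Function.update_of_ne hzd] at this
    exact hx1 this
  · rintro ⟨e, g1, g2, g3⟩
    by_cases hez : e = z
    · have := g2 d (by rw [hez]; exact hdz)
      rw [Function.update_of_ne hdz, Function.update_self] at this
      exact hx2 this.symm
    · have := g2 z (fun h => hez h.symm)
      rw [Function.update_self, Function.update_of_ne hzd] at this
      exact hx1 this

lemma iso_const (hk : 3 ≤ k) (hn : 1 ≤ n)
    (g : hanoiGraph n k ≃g hanoiGraph n k) (c : Fin k) :
    ∃ c', g (fun _ => c) = fun _ => c' := by
  by_contra hc
  push_neg at hc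
  obtain ⟨w1, w2, a1, a2, hne, hna⟩ := nonconst_not_clique hk hn (g (fun _ => c)) hc
  have b1 : (hanoiGraph n k).Adj (fun _ => c) (g.symm w1) := by
    have ha := a1
    rw [show w1 = g (g.symm w1) by simp] at ha
    exact g.map_adj_iff.mp ha
  have b2 : (hanoiGraph n k).Adj (fun _ => c) (g.symm w2) := by
    have ha := a2
    rw [show w2 = g (g.symm w2) by simp] at ha
    exact g.map_adj_iff.mp ha
  have bne : g.symm w1 ≠ g.symm w2 := fun h => hne (by
    have := congrArg g h
    simpa using this)
  have := const_clique hn c _ _ b1 b2 bne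
  have := g.map_adj_iff.mpr this
  simp at this
  exact hna this

end HanoiAux

open HanoiAux SimpleGraph in
/-- If an automorphism `g` of `H_n^k` fixes the perfect state `\overline{i}`, then
`g` maps the substructure `[i]` onto itself. -/
theorem hanoi_aut_preserves_substructure (n k : ℕ) (hk : 3 ≤ k) (hn : 1 ≤ n)
    (g : hanoiGraph n k ≃g hanoiGraph n k) (i : Fin k)
    (hg : g (fun _ => i) = fun _ => i)
    (v : Fin n → Fin k) (hv : v ⟨n - 1, by omega⟩ = i) :
    g v ⟨n - 1, by omega⟩ = i := by
  by_contra hqi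
  obtain ⟨j, hj⟩ := iso_const hk hn g.symm (g v ⟨n - 1, by omega⟩)
  have hgj : g (fun _ => j) = fun _ => g v ⟨n - 1, by omega⟩ := by
    rw [← hj]
    simp
  have hji : j ≠ i := by
    rintro rfl
    rw [hg] at hgj
    exact hqi (congrFun hgj ⟨n - 1, by omega⟩).symm
  have hr1 : (hanoiGraph n k).Reachable v (fun _ => j) := reach hk n v j
  obtain ⟨hreachI, hlt1⟩ := dist_lt hn v j (by rw [hv]; exact fun h => hji h.symm) hr1
  rw [hv] at hreachI hlt1
  have hr2 : (hanoiGraph n k).Reachable (g v) (fun _ => i) := by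
    have h' := hreachI.map g.toHom
    have he : g.toHom (fun _ : Fin n => i) = fun _ => i := hg
    rw [he] at h'
    exact h'
  obtain ⟨-, hlt2⟩ := dist_lt hn (g v) i hqi hr2
  have e1 : (hanoiGraph n k).dist (g v) (fun _ => i) =
      (hanoiGraph n k).dist v (fun _ => i) := by
    have := iso_dist g v (fun _ => i)
    rwa [hg] at this
  have e2 : (hanoiGraph n k).dist (g v) (fun _ => g v ⟨n - 1, by omega⟩) =
      (hanoiGraph n k).dist v (fun _ => j) := by
    have := iso_dist g v (fun _ => j)
    rwa [hgj] at this
  omega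
end

section
/- For every k ≥ 3 and every n ≥ 1, the automorphism group of the Tower of Hanoi graph H_n^k is isomorphic to the symmetric group S_k on the k pegs; explicitly, the map sending a permutation σ of the pegs to the automorphism v ↦ σ ∘ v is a group isomorphism from S_k onto the automorphism group of H_n^k. -/
/-- The automorphism group of the Tower of Hanoi graph, under composition. -/
instance hanoiAutGroup (n k : ℕ) : Group (hanoiGraph n k ≃g hanoiGraph n k) where
  mul a b := b.trans a
  one := RelIso.refl _
  inv a := a.symm
  mul_assoc a b c := rfl
  one_mul a := RelIso.ext fun _ => rfl
  mul_one a := RelIso.ext fun _ => rfl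
  inv_mul_cancel a := RelIso.ext fun x => a.symm_apply_apply x

namespace HanoiAux

variable {k : ℕ}

lemma adj_iff {n : ℕ} {v w : Fin n → Fin k} : (hanoiGraph n k).Adj v w ↔
    ∃ d : Fin n, v d ≠ w d ∧ (∀ i : Fin n, i ≠ d → v i = w i) ∧
    (∀ i : Fin n, i < d → v i ≠ v d ∧ v i ≠ w d) := Iff.rfl

lemma exists_ne_ne (hk : 3 ≤ k) (a b : Fin k) : ∃ c : Fin k, c ≠ a ∧ c ≠ b := by
  by_contra h
  push_neg at h
  have hsub : (Finset.univ : Finset (Fin k)) ⊆ {a, b} := by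
    intro c _
    simp only [Finset.mem_insert, Finset.mem_singleton]
    rcases eq_or_ne c a with h1 | h1
    · exact Or.inl h1
    · exact Or.inr (h c h1)
  have h2 := Finset.card_le_card hsub
  rw [Finset.card_univ, Fintype.card_fin] at h2
  have h3 : ({a, b} : Finset (Fin k)).card ≤ 2 :=
    (Finset.card_insert_le _ _).trans (by simp)
  omega

end HanoiAux

namespace HanoiAux2
open HanoiAux

variable {k : ℕ}

/-- `x` and `y` differ exactly at coordinate `d`. -/
def D {n : ℕ} (x y : Fin n → Fin k) (d : Fin n) : Prop :=
  x d ≠ y d ∧ ∀ i, i ≠ d → x i = y i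

lemma D.symm {n : ℕ} {x y : Fin n → Fin k} {d : Fin n} (h : D x y d) : D y x d :=
  ⟨h.1.symm, fun i hi => (h.2 i hi).symm⟩

lemma D.unique {n : ℕ} {x y : Fin n → Fin k} {c d : Fin n}
    (h : D x y c) (h' : D x y d) : c = d := by
  by_contra hcd
  exact h.1 (h'.2 c hcd)

/-- In a triangle whose vertices pairwise differ in a single coordinate, all
three differing coordinates coincide. -/
lemma triangle {n : ℕ} {x y z : Fin n → Fin k} {d e f : Fin n}
    (hxy : D x y d) (hxz : D x z e) (hyz : D y z f) : f = d := by
  by_contra hfd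
  have hxyf : x f = y f := hxy.2 f hfd
  have hxzf : x f ≠ z f := by rw [hxyf]; exact hyz.1
  have hfe : f = e := by
    by_contra hh
    exact hxzf (hxz.2 f hh)
  have hdf : d ≠ f := fun hh => hfd hh.symm
  have hde : d ≠ e := fun hh => hfd (hfe.trans hh.symm)
  have h1 : y d = z d := hyz.2 d hdf
  have h2 : x d = z d := hxz.2 d hde
  exact hxy.1 (h2.trans h1.symm)

/-- Automorphisms preserve the "same tail" (disk-0 clique) relation. -/
lemma tail_map_eq {m : ℕ} (hk : 3 ≤ k) (g : hanoiGraph (m+1) k ≃g hanoiGraph (m+1) k)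
    {v w : Fin (m+1) → Fin k} (h : Fin.tail v = Fin.tail w) :
    Fin.tail (g v) = Fin.tail (g w) := by
  rcases eq_or_ne v w with rfl | hvw
  · rfl
  have h0 : v 0 ≠ w 0 := by
    intro h0
    apply hvw
    funext i
    rcases Fin.eq_zero_or_eq_succ i with rfl | ⟨j, rfl⟩
    · exact h0
    · exact congrFun h j
  set x : Fin k → Fin (m+1) → Fin k := fun r => Fin.cons r (Fin.tail v) with hxdef
  have hxv : x (v 0) = v := Fin.cons_self_tail v
  have hxw : x (w 0) = w := by
    rw [hxdef]
    show Fin.cons (w 0) (Fin.tail v) = w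
    rw [h]
    exact Fin.cons_self_tail w
  have hadj : ∀ r r' : Fin k, r ≠ r' → (hanoiGraph (m+1) k).Adj (x r) (x r') := by
    intro r r' hrr
    refine adj_iff.mpr ⟨0, by simpa [hxdef] using hrr, ?_, ?_⟩
    · intro i hi
      rcases Fin.eq_zero_or_eq_succ i with rfl | ⟨j, rfl⟩
      · exact absurd rfl hi
      · simp [hxdef]
    · intro i hi
      exact absurd hi (Fin.not_lt_zero _)
  have hAdjvw : (hanoiGraph (m+1) k).Adj v w := by
    rw [← hxv, ← hxw]; exact hadj _ _ h0
  have hgvw : (hanoiGraph (m+1) k).Adj (g v) (g w) := g.map_rel_iff.mpr hAdjvw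
  obtain ⟨d, hd1, hd2, hd3⟩ := adj_iff.mp hgvw
  rcases eq_or_ne d 0 with rfl | hd0
  · funext j
    exact hd2 j.succ (Fin.succ_ne_zero j)
  exfalso
  have hDvw : D (g v) (g w) d := ⟨hd1, hd2⟩
  have step1 : ∀ r, r ≠ v 0 → D (g v) (g (x r)) d := by
    intro r hr
    rcases eq_or_ne r (w 0) with rfl | hrw
    · rw [hxw]; exact hDvw
    · have a1 : (hanoiGraph (m+1) k).Adj (g v) (g (x r)) := by
        rw [← hxv]; exact g.map_rel_iff.mpr (hadj _ _ (fun hh => hr hh.symm))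
      have a2 : (hanoiGraph (m+1) k).Adj (g w) (g (x r)) := by
        rw [← hxw]; exact g.map_rel_iff.mpr (hadj _ _ (fun hh => hrw hh.symm))
      obtain ⟨e, he1, he2, -⟩ := adj_iff.mp a1
      obtain ⟨f, hf1, hf2, -⟩ := adj_iff.mp a2
      have hfd : f = d := triangle hDvw ⟨he1, he2⟩ ⟨hf1, hf2⟩
      have hed : e = d := triangle hDvw.symm (hfd ▸ (⟨hf1, hf2⟩ : D (g w) (g (x r)) f)) ⟨he1, he2⟩
      exact hed ▸ (⟨he1, he2⟩ : D (g v) (g (x r)) e)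
  have step2 : ∀ r r', r ≠ r' → (g (x r)) d ≠ (g (x r')) d := by
    intro r r' hrr
    rcases eq_or_ne r (v 0) with rfl | hr
    · rw [hxv]
      exact (step1 r' (fun hh => hrr hh.symm)).1
    rcases eq_or_ne r' (v 0) with rfl | hr'
    · rw [hxv]
      exact (step1 r hr).1.symm
    · have a3 : (hanoiGraph (m+1) k).Adj (g (x r)) (g (x r')) :=
        g.map_rel_iff.mpr (hadj _ _ hrr)
      obtain ⟨c, hc1, hc2, -⟩ := adj_iff.mp a3
      have hcd : c = d := triangle (step1 r hr) (step1 r' hr') ⟨hc1, hc2⟩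
      exact hcd ▸ hc1
  have hinj : Function.Injective (fun r => g (x r) d) := by
    intro r r' hrr
    by_contra hne
    exact step2 r r' hne hrr
  obtain ⟨r0, hr0⟩ := Finite.injective_iff_surjective.mp hinj ((g v) 0)
  have hr0' : g (x r0) d = (g v) 0 := hr0
  have h0d : (0 : Fin (m+1)) < d := Fin.pos_of_ne_zero hd0
  have hgv0 : (g v) 0 ≠ (g v) d := (hd3 0 h0d).1
  have hr0v : r0 ≠ v 0 := by
    intro hh
    rw [hh, hxv] at hr0'
    exact hgv0 hr0'.symm
  have a4 : (hanoiGraph (m+1) k).Adj (g v) (g (x r0)) := by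
    rw [← hxv]; exact g.map_rel_iff.mpr (hadj _ _ (Ne.symm hr0v))
  obtain ⟨c, hc1, hc2, hc3⟩ := adj_iff.mp a4
  have hcd : c = d := D.unique ⟨hc1, hc2⟩ (step1 r0 hr0v)
  subst hcd
  exact (hc3 0 h0d).2 hr0'.symm

/-- A legal move of a disk other than disk 0 restricts to the tails. -/
lemma adj_down {m : ℕ} {v w : Fin (m+1) → Fin k}
    (h : (hanoiGraph (m+1) k).Adj v w) (ht : Fin.tail v ≠ Fin.tail w) :
    (hanoiGraph m k).Adj (Fin.tail v) (Fin.tail w) := by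
  obtain ⟨d, h1, h2, h3⟩ := adj_iff.mp h
  have hd0 : d ≠ 0 := by
    rintro rfl
    apply ht; funext j; exact h2 j.succ (Fin.succ_ne_zero j)
  obtain ⟨d', rfl⟩ := Fin.eq_succ_of_ne_zero hd0
  refine adj_iff.mpr ⟨d', h1, ?_, ?_⟩
  · intro j hj
    exact h2 j.succ (fun hh => hj (Fin.succ_injective _ hh))
  · intro j hj
    exact h3 j.succ (Fin.succ_lt_succ_iff.mpr hj)

/-- A legal move on tails lifts, putting disk 0 on some third peg. -/
lemma adj_up {m : ℕ} (hk : 3 ≤ k) {u u' : Fin m → Fin k}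
    (h : (hanoiGraph m k).Adj u u') :
    ∃ p : Fin k, (hanoiGraph (m+1) k).Adj (Fin.cons p u) (Fin.cons p u') := by
  obtain ⟨d, h1, h2, h3⟩ := adj_iff.mp h
  obtain ⟨p, hp1, hp2⟩ := exists_ne_ne hk (u d) (u' d)
  refine ⟨p, adj_iff.mpr ⟨d.succ, by simpa using h1, ?_, ?_⟩⟩
  · intro i hi
    rcases Fin.eq_zero_or_eq_succ i with rfl | ⟨j, rfl⟩
    · simp
    · have hj : j ≠ d := fun hh => hi (by rw [hh])
      simpa using h2 j hj
  · intro i hi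
    rcases Fin.eq_zero_or_eq_succ i with rfl | ⟨j, rfl⟩
    · simpa using ⟨hp1, hp2⟩
    · have hj : j < d := Fin.succ_lt_succ_iff.mp hi
      simpa using h3 j hj

end HanoiAux2

namespace HanoiAux3
open HanoiAux HanoiAux2

variable {k : ℕ}

lemma adj_map {n : ℕ} (σ : Equiv.Perm (Fin k)) {v w : Fin n → Fin k}
    (h : (hanoiGraph n k).Adj v w) : (hanoiGraph n k).Adj (σ ∘ v) (σ ∘ w) := by
  obtain ⟨d, h1, h2, h3⟩ := adj_iff.mp h
  exact adj_iff.mpr ⟨d, fun hh => h1 (σ.injective hh), fun i hi => congrArg σ (h2 i hi),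
    fun i hi => ⟨fun hh => (h3 i hi).1 (σ.injective hh),
      fun hh => (h3 i hi).2 (σ.injective hh)⟩⟩

/-- The explicit automorphism induced by a peg permutation. -/
def E {n : ℕ} (σ : Equiv.Perm (Fin k)) : hanoiGraph n k ≃g hanoiGraph n k where
  toEquiv := Equiv.piCongrRight fun _ => σ
  map_rel_iff' := by
    intro v w
    constructor
    · intro h
      have h2 : (hanoiGraph n k).Adj (σ.symm ∘ (σ ∘ v)) (σ.symm ∘ (σ ∘ w)) :=
        adj_map σ.symm h
      have e1 : σ.symm ∘ (σ ∘ v) = v := funext fun i => σ.symm_apply_apply _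
      have e2 : σ.symm ∘ (σ ∘ w) = w := funext fun i => σ.symm_apply_apply _
      rw [e1, e2] at h2
      exact h2
    · exact fun h => adj_map σ h

@[simp] lemma E_apply {n : ℕ} (σ : Equiv.Perm (Fin k)) (v : Fin n → Fin k) :
    E σ v = σ ∘ v := rfl

/-- An automorphism fixing every tail (disk-0 clique pointwise as cliques)
is the identity, for at least two disks. -/
lemma fix_of_tail_fix {l : ℕ} (hk : 3 ≤ k)
    (g : hanoiGraph (l+2) k ≃g hanoiGraph (l+2) k)
    (hg : ∀ v, Fin.tail (g v) = Fin.tail v) : ∀ v, g v = v := by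
  have main : ∀ v : Fin (l+2) → Fin k, v 0 ≠ Fin.tail v 0 → g v = v := by
    intro v hvs
    have claim : ∀ t : Fin k, t ≠ Fin.tail v 0 → t ≠ v 0 →
        (g v) 0 ≠ Fin.tail v 0 ∧ (g v) 0 ≠ t := by
      intro t hts htp
      have hadjvw : (hanoiGraph (l+2) k).Adj v
          (Fin.cons (v 0) (Function.update (Fin.tail v) 0 t)) := by
        refine adj_iff.mpr ⟨Fin.succ 0, ?_, ?_, ?_⟩
        · show v (Fin.succ 0) ≠ Fin.cons (v 0) (Function.update (Fin.tail v) 0 t) (Fin.succ 0)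
          rw [Fin.cons_succ, Function.update_self]
          exact fun hh => hts hh.symm
        · intro i hi
          rcases Fin.eq_zero_or_eq_succ i with rfl | ⟨j, rfl⟩
          · rw [Fin.cons_zero]
          · have hj : j ≠ 0 := fun hh => hi (by rw [hh])
            show v j.succ = Fin.cons (v 0) (Function.update (Fin.tail v) 0 t) j.succ
            rw [Fin.cons_succ, Function.update_of_ne hj]
            rfl
        · intro i hi
          have hi0 : i = 0 := by
            have h1 : (i : ℕ) < 1 := by simpa [Fin.lt_def] using hi
            apply Fin.ext
            simpa using Nat.lt_one_iff.mp h1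
          subst hi0
          constructor
          · exact hvs
          · show v 0 ≠ Fin.cons (v 0) (Function.update (Fin.tail v) 0 t) (Fin.succ 0)
            rw [Fin.cons_succ, Function.update_self]
            exact fun hh => htp hh.symm
      have hadj2 := g.map_rel_iff.mpr hadjvw
      obtain ⟨c, hc1, hc2, hc3⟩ := adj_iff.mp hadj2
      have egv : (g v) (Fin.succ 0) = Fin.tail v 0 := congrFun (hg v) 0
      have egw : (g (Fin.cons (v 0) (Function.update (Fin.tail v) 0 t))) (Fin.succ 0) = t := by
        have e := congrFun (hg (Fin.cons (v 0) (Function.update (Fin.tail v) 0 t))) 0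
        have e2 : Fin.tail (Fin.cons (v 0) (Function.update (Fin.tail v) 0 t)) 0 = t := by
          rw [Fin.tail_cons, Function.update_self]
        exact e.trans e2
      have hcs : c = Fin.succ 0 := by
        by_contra hcs
        have heq := hc2 (Fin.succ 0) (fun hh => hcs hh.symm)
        rw [egv, egw] at heq
        exact hts heq.symm
      subst hcs
      have h0c : (0 : Fin (l+2)) < Fin.succ 0 := Fin.succ_pos 0
      have h5 := hc3 0 h0c
      exact ⟨egv ▸ h5.1, egw ▸ h5.2⟩
    rcases eq_or_ne ((g v) 0) (v 0) with h | h
    · calc g v = Fin.cons ((g v) 0) (Fin.tail (g v)) := (Fin.cons_self_tail _).symm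
        _ = Fin.cons (v 0) (Fin.tail v) := by rw [h, hg v]
        _ = v := Fin.cons_self_tail v
    · exfalso
      rcases eq_or_ne ((g v) 0) (Fin.tail v 0) with hqs | hqs
      · obtain ⟨t, ht1, ht2⟩ := exists_ne_ne hk (Fin.tail v 0) (v 0)
        exact (claim t ht1 ht2).1 hqs
      · exact (claim ((g v) 0) hqs h).2 rfl
  intro v
  rcases eq_or_ne (v 0) (Fin.tail v 0) with hps | hps
  · rcases eq_or_ne ((g v) 0) (Fin.tail v 0) with hqs | hqs
    · calc g v = Fin.cons ((g v) 0) (Fin.tail (g v)) := (Fin.cons_self_tail _).symm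
        _ = Fin.cons (v 0) (Fin.tail v) := by rw [hqs, hg v, ← hps]
        _ = v := Fin.cons_self_tail v
    · exfalso
      have hv' : g (Fin.cons ((g v) 0) (Fin.tail v)) = Fin.cons ((g v) 0) (Fin.tail v) := by
        apply main
        rw [Fin.cons_zero, Fin.tail_cons]
        exact hqs
      have hgv : g v = Fin.cons ((g v) 0) (Fin.tail v) := by
        calc g v = Fin.cons ((g v) 0) (Fin.tail (g v)) := (Fin.cons_self_tail _).symm
          _ = _ := by rw [hg v]
      have hvv : v = Fin.cons ((g v) 0) (Fin.tail v) :=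
        g.injective (hgv.trans hv'.symm)
      have hv0 : v 0 = (g v) 0 := by
        have := congrFun hvv 0
        rwa [Fin.cons_zero] at this
      exact hqs (hv0.symm.trans hps)
  · exact main v hps

end HanoiAux3

namespace HanoiAux4
open HanoiAux HanoiAux2 HanoiAux3

variable {k : ℕ}

lemma key_one (f : hanoiGraph 1 k ≃g hanoiGraph 1 k) :
    ∃ σ : Equiv.Perm (Fin k), ∀ v, f v = σ ∘ v := by
  have hconst : ∀ v : Fin 1 → Fin k, v = fun _ => v 0 := fun v => funext fun i => by
    rw [Subsingleton.elim i 0]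
  refine ⟨⟨fun q => f (fun _ => q) 0, fun q => f.symm (fun _ => q) 0, ?_, ?_⟩, ?_⟩
  · intro q
    show f.symm (fun _ => f (fun _ => q) 0) 0 = q
    rw [← hconst (f (fun _ => q))]
    rw [f.symm_apply_apply]
  · intro q
    show f (fun _ => f.symm (fun _ => q) 0) 0 = q
    rw [← hconst (f.symm (fun _ => q))]
    rw [f.apply_symm_apply]
  · intro v
    funext i
    rw [Subsingleton.elim i 0]
    show f v 0 = f (fun _ => v 0) 0
    rw [← hconst v]

lemma key_step (l : ℕ) (hk : 3 ≤ k)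
    (IH : ∀ f : hanoiGraph (l+1) k ≃g hanoiGraph (l+1) k,
      ∃ σ : Equiv.Perm (Fin k), ∀ v, f v = σ ∘ v)
    (f : hanoiGraph (l+2) k ≃g hanoiGraph (l+2) k) :
    ∃ σ : Equiv.Perm (Fin k), ∀ v, f v = σ ∘ v := by
  classical
  have hp0 : 0 < k := by omega
  set p0 : Fin k := ⟨0, hp0⟩ with hp0def
  set F : (Fin (l+1) → Fin k) → (Fin (l+1) → Fin k) :=
    fun u => Fin.tail (f (Fin.cons p0 u)) with hF
  set Finv : (Fin (l+1) → Fin k) → (Fin (l+1) → Fin k) :=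
    fun u => Fin.tail (f.symm (Fin.cons p0 u)) with hFinv
  have hnatF : ∀ v, Fin.tail (f v) = F (Fin.tail v) := by
    intro v
    exact tail_map_eq hk f (v := v) (w := Fin.cons p0 (Fin.tail v))
      (by rw [Fin.tail_cons])
  have hnatFinv : ∀ v, Fin.tail (f.symm v) = Finv (Fin.tail v) := by
    intro v
    exact tail_map_eq hk f.symm (v := v) (w := Fin.cons p0 (Fin.tail v))
      (by rw [Fin.tail_cons])
  have hleft : ∀ u, Finv (F u) = u := by
    intro u
    have h1 : Finv (F u) = Finv (Fin.tail (f (Fin.cons p0 u))) := rfl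
    rw [h1, ← hnatFinv (f (Fin.cons p0 u)), f.symm_apply_apply, Fin.tail_cons]
  have hright : ∀ u, F (Finv u) = u := by
    intro u
    have h1 : F (Finv u) = F (Fin.tail (f.symm (Fin.cons p0 u))) := rfl
    rw [h1, ← hnatF (f.symm (Fin.cons p0 u)), f.apply_symm_apply, Fin.tail_cons]
  have fbar_rel : ∀ {u u' : Fin (l+1) → Fin k},
      (hanoiGraph (l+1) k).Adj u u' → (hanoiGraph (l+1) k).Adj (F u) (F u') := by
    intro u u' h
    obtain ⟨p, hp⟩ := adj_up hk h
    have h2 : (hanoiGraph (l+2) k).Adj (f (Fin.cons p u)) (f (Fin.cons p u')) :=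
      f.map_rel_iff.mpr hp
    have t1 : Fin.tail (f (Fin.cons p u)) = F u := by
      rw [hnatF, Fin.tail_cons]
    have t2 : Fin.tail (f (Fin.cons p u')) = F u' := by
      rw [hnatF, Fin.tail_cons]
    have hFinj : Function.Injective F := fun a b hab => by
      rw [← hleft a, hab, hleft b]
    have hne : F u ≠ F u' := fun hh => h.ne (hFinj hh)
    have := adj_down h2 (by rw [t1, t2]; exact hne)
    rwa [t1, t2] at this
  have fbar_rel' : ∀ {u u' : Fin (l+1) → Fin k},
      (hanoiGraph (l+1) k).Adj (F u) (F u') → (hanoiGraph (l+1) k).Adj u u' := by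
    intro u u' h
    obtain ⟨p, hp⟩ := adj_up hk h
    have h2 : (hanoiGraph (l+2) k).Adj (f.symm (Fin.cons p (F u)))
        (f.symm (Fin.cons p (F u'))) := f.symm.map_rel_iff.mpr hp
    have t1 : Fin.tail (f.symm (Fin.cons p (F u))) = u := by
      rw [hnatFinv, Fin.tail_cons, hleft]
    have t2 : Fin.tail (f.symm (Fin.cons p (F u'))) = u' := by
      rw [hnatFinv, Fin.tail_cons, hleft]
    have hne : u ≠ u' := fun hh => h.ne (by rw [hh])
    have := adj_down h2 (by rw [t1, t2]; exact hne)
    rwa [t1, t2] at this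
  let fbar : hanoiGraph (l+1) k ≃g hanoiGraph (l+1) k :=
    { toFun := F, invFun := Finv, left_inv := hleft, right_inv := hright,
      map_rel_iff' := fun {u u'} => ⟨fun h => fbar_rel' h, fun h => fbar_rel h⟩ }
  obtain ⟨σ, hσ⟩ := IH fbar
  have hσ' : ∀ u, F u = σ ∘ u := hσ
  have htail : ∀ v, Fin.tail (f v) = σ ∘ Fin.tail v :=
    fun v => (hnatF v).trans (hσ' _)
  let g : hanoiGraph (l+2) k ≃g hanoiGraph (l+2) k := f.trans (E σ.symm)
  have hgt : ∀ v, Fin.tail (g v) = Fin.tail v := by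
    intro v
    funext j
    show σ.symm ((f v) j.succ) = v j.succ
    have h1 : (f v) j.succ = σ (v j.succ) := congrFun (htail v) j
    rw [h1, σ.symm_apply_apply]
  have hfix := fix_of_tail_fix hk g hgt
  refine ⟨σ, fun v => ?_⟩
  funext i
  have h2 : σ.symm ((f v) i) = v i := congrFun (hfix v) i
  show (f v) i = σ (v i)
  rw [← h2, σ.apply_symm_apply]

lemma key (hk : 3 ≤ k) (m : ℕ) :
    ∀ f : hanoiGraph (m+1) k ≃g hanoiGraph (m+1) k,
      ∃ σ : Equiv.Perm (Fin k), ∀ v, f v = σ ∘ v := by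
  induction m with
  | zero => exact key_one
  | succ l ih => exact key_step l hk ih

end HanoiAux4

/-- Main theorem: for every k ≥ 3 and n ≥ 1, the automorphism group of `H_n^k`
is isomorphic to the symmetric group `S_k`, via the map sending a peg
permutation `σ` to the automorphism `v ↦ σ ∘ v`. -/
theorem hanoi_aut_group_iso_symmetric_group (n k : ℕ) (hk : 3 ≤ k) (hn : 1 ≤ n) :
    ∃ e : Equiv.Perm (Fin k) ≃* (hanoiGraph n k ≃g hanoiGraph n k),
      ∀ (σ : Equiv.Perm (Fin k)) (v : Fin n → Fin k), e σ v = σ ∘ v := by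

  obtain ⟨m, rfl⟩ : ∃ m, n = m + 1 := ⟨n - 1, by omega⟩
  let Φ : Equiv.Perm (Fin k) →* (hanoiGraph (m+1) k ≃g hanoiGraph (m+1) k) :=
    { toFun := HanoiAux3.E
      map_one' := RelIso.ext fun v => funext fun i => rfl
      map_mul' := fun σ τ => RelIso.ext fun v => funext fun i => rfl }
  have hinj : Function.Injective Φ := by
    intro σ τ h
    have h' : ∀ v, Φ σ v = Φ τ v := fun v => by rw [h]
    apply Equiv.ext
    intro q
    have h2 : (σ ∘ fun _ => q) (0 : Fin (m+1)) = (τ ∘ fun _ => q) (0 : Fin (m+1)) :=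
      congrFun (h' (fun _ => q)) 0
    exact h2
  have hsurj : Function.Surjective Φ := by
    intro f
    obtain ⟨σ, hσ⟩ := HanoiAux4.key hk m f
    exact ⟨σ, RelIso.ext fun v => (hσ v).symm⟩
  exact ⟨MulEquiv.ofBijective Φ ⟨hinj, hsurj⟩, fun σ v => rfl⟩
end
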